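/- arXiv:0812.2673 — 3 statements merged into one kernel-verified Lean document; each statement's English description precedes it below -/
import Mathlib

section
/- Let u be a harmonic function on a neighborhood of the closed disc B̄(a, R) in ℂ, with u ≥ 0 on B̄(a, R). Suppose u(z₁) = 0 for some point z₁ with |z₁ − a| = R. Then |∇u(z₁)| ≥ u(a)/(2R). -/
open Metric Set Filter Complex
open scoped Topology NNReal ENNReal

/-- Two real-linear continuous maps on ℂ agreeing at 1 and I are equal. -/
lemma clm_ext_complex {E : Type*} [NormedAddCommGroup E] [NormedSpace ℝ E]
    {L₁ L₂ : ℂ →L[ℝ] E} (h1 : L₁ 1 = L₂ 1) (hI : L₁ Complex.I = L₂ Complex.I) :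
    L₁ = L₂ := by
  ext w
  have hw : (w : ℂ) = w.re • (1 : ℂ) + w.im • Complex.I := by
    simp [Complex.real_smul, Complex.re_add_im]
  rw [hw, map_add, map_add, map_smul, map_smul, map_smul, map_smul, h1, hI]

lemma re_div_bound {t : ℂ} {s : ℝ} (hs : s < 1) (ht : ‖t‖ ≤ s) :
    (1 - s) / 2 ≤ ((1 + t) / (1 - t)).re := by
  have h0 : 0 ≤ s := (norm_nonneg t).trans ht
  have hq : t.re ^ 2 + t.im ^ 2 ≤ s ^ 2 := by
    have := Complex.sq_norm t
    rw [Complex.normSq_apply] at this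
    nlinarith [norm_nonneg t]
  have hx : -s ≤ t.re := by
    have := Complex.abs_re_le_norm t
    have := abs_le.1 (this.trans ht)
    linarith [this.1]
  have hne : 1 - t ≠ 0 := by
    intro h
    have : t = 1 := by linear_combination -h
    rw [this] at ht
    simp at ht
    linarith
  have hN : 0 < Complex.normSq (1 - t) := Complex.normSq_pos.2 hne
  rw [Complex.div_re]
  have hre : (1 + t).re = 1 + t.re := by simp
  have him : (1 + t).im = t.im := by simp
  have hre' : (1 - t).re = 1 - t.re := by simp
  have him' : (1 - t).im = -t.im := by simp
  rw [hre, him, hre', him', ← add_div, le_div_iff₀ hN]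
  rw [Complex.normSq_apply, hre', him']
  nlinarith [mul_nonneg (sub_nonneg.2 hs.le) (by linarith : (0:ℝ) ≤ s + t.re),
    mul_nonneg (mul_nonneg (sub_nonneg.2 hs.le) (sub_nonneg.2 hs.le)) (by linarith : (0:ℝ) ≤ 1 + s),
    mul_nonneg (sub_nonneg.2 hq) (by linarith : (0:ℝ) ≤ 3 - s)]

lemma harnack_ball {F : ℂ → ℂ} {a : ℂ} {R : ℝ} {c : ℝ} (hc : 0 < c)
    (hF : DifferentiableOn ℂ F (Metric.ball a R))
    (hFa : F a = (c : ℂ))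
    (hre : ∀ z ∈ Metric.ball a R, 0 ≤ (F z).re) :
    ∀ z ∈ Metric.ball a R, c * (1 - dist z a / R) / 2 ≤ (F z).re := by
  intro z hz
  have hR : 0 < R := pos_of_mem_ball hz
  have hden : ∀ w ∈ Metric.ball a R, F w + (c : ℂ) ≠ 0 := by
    intro w hw h0
    have : (F w + (c : ℂ)).re = 0 := by rw [h0]; simp
    simp only [Complex.add_re, Complex.ofReal_re] at this
    have := hre w hw
    linarith
  set h : ℂ → ℂ := fun w => (F w - (c : ℂ)) / (F w + (c : ℂ)) with hh
  have hdiff : DifferentiableOn ℂ h (Metric.ball a R) :=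
    (hF.sub (differentiableOn_const _)).div (hF.add (differentiableOn_const _)) hden
  have hha : h a = 0 := by simp [hh, hFa]
  have hbound : ∀ w ∈ Metric.ball a R, ‖h w‖ ≤ 1 := by
    intro w hw
    rw [hh]
    simp only [norm_div]
    rw [div_le_one (by
      simpa [norm_pos_iff] using hden w hw)]
    have hnsq : Complex.normSq (F w - (c : ℂ)) ≤ Complex.normSq (F w + (c : ℂ)) := by
      simp only [Complex.normSq_apply, Complex.sub_re, Complex.sub_im, Complex.add_re,
        Complex.add_im, Complex.ofReal_re, Complex.ofReal_im]
      nlinarith [hre w hw, hc.le]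
    have h1 : ‖F w - (c:ℂ)‖ = Real.sqrt (Complex.normSq (F w - (c:ℂ))) := by
      rw [Complex.norm_def]
    have h2 : ‖F w + (c:ℂ)‖ = Real.sqrt (Complex.normSq (F w + (c:ℂ))) := by
      rw [Complex.norm_def]
    rw [h1, h2]
    exact Real.sqrt_le_sqrt hnsq
  -- Schwarz lemma
  have hsch : ‖h z‖ ≤ dist z a / R := by
    have hev : ∀ ε ∈ Set.Ioi (0:ℝ), ‖h z‖ ≤ (1 + ε) / R * dist z a := by
      intro ε hε
      have hmaps : Set.MapsTo h (Metric.ball a R) (Metric.ball (h a) (1 + ε)) := by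
        intro w hw
        rw [Metric.mem_ball, hha, dist_zero_right]
        exact lt_of_le_of_lt (hbound w hw) (by linarith [Set.mem_Ioi.1 hε])
      have := Complex.dist_le_div_mul_dist_of_mapsTo_ball hdiff (hmaps.mono_right Metric.ball_subset_closedBall) hz
      rwa [hha, dist_zero_right] at this
    have htend : Tendsto (fun ε : ℝ => (1 + ε) / R * dist z a) (𝓝[>] 0)
        (𝓝 (dist z a / R)) := by
      have : Tendsto (fun ε : ℝ => (1 + ε) / R * dist z a) (𝓝 0)
          (𝓝 ((1 + 0) / R * dist z a)) := by
        apply Tendsto.mul_const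
        exact (tendsto_const_nhds.add tendsto_id).div_const R
      rw [show (1 + 0) / R * dist z a = dist z a / R by ring] at this
      exact this.mono_left nhdsWithin_le_nhds
    exact ge_of_tendsto htend (eventually_nhdsWithin_of_forall hev)
  -- recover F z
  set t := h z with hts
  have hs1 : dist z a / R < 1 := (div_lt_one hR).2 (Metric.mem_ball.1 hz)
  have htle : ‖t‖ ≤ dist z a / R := hsch
  have ht1 : (1 : ℂ) - t ≠ 0 := by
    intro h0
    have : t = 1 := by linear_combination -h0
    rw [this] at htle
    simp at htle
    linarith
  have hFz : F z = (c : ℂ) * ((1 + t) / (1 - t)) := by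
    have h0 : t * (F z + (c:ℂ)) = F z - (c:ℂ) := by
      rw [hts, hh]
      exact div_mul_cancel₀ _ (hden z hz)
    rw [mul_div_assoc' , eq_div_iff ht1]
    linear_combination -h0
  have hre' : (F z).re = c * ((1 + t) / (1 - t)).re := by
    rw [hFz, Complex.mul_re]
    simp
  rw [hre']
  have := re_div_bound hs1 htle
  calc c * (1 - dist z a / R) / 2 = c * ((1 - dist z a / R) / 2) := by ring
    _ ≤ c * ((1 + t) / (1 - t)).re := by
        exact mul_le_mul_of_nonneg_left this hc.le

lemma cr_differentiable {u : ℂ → ℝ} {U : Set ℂ} (hU : IsOpen U)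
    (hC2 : ContDiffOn ℝ 2 u U)
    (hharm : ∀ z ∈ U, fderiv ℝ (fun w => fderiv ℝ u w 1) z 1 +
        fderiv ℝ (fun w => fderiv ℝ u w Complex.I) z Complex.I = 0)
    {z : ℂ} (hz : z ∈ U) :
    DifferentiableAt ℂ
      (fun w => ((fderiv ℝ u w 1 : ℝ) : ℂ) - Complex.I * ((fderiv ℝ u w Complex.I : ℝ) : ℂ)) z := by
  have hUdiff : DifferentiableOn ℝ u U := hC2.differentiableOn two_ne_zero
  have hDu1 : ContDiffOn ℝ 1 (fun w => fderiv ℝ u w) U :=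
    hC2.fderiv_of_isOpen hU (by norm_num)
  have hDuAt : HasFDerivAt (fun w => fderiv ℝ u w) (fderiv ℝ (fderiv ℝ u) z) z :=
    ((hDu1.differentiableOn one_ne_zero).differentiableAt (hU.mem_nhds hz)).hasFDerivAt
  set H : ℂ →L[ℝ] ℂ →L[ℝ] ℝ := fderiv ℝ (fderiv ℝ u) z with hH
  -- symmetry of second derivative
  have hsymm : ∀ v w : ℂ, H v w = H w v := by
    intro v w
    refine second_derivative_symmetric_of_eventually (f := u) ?_ hDuAt v w
    filter_upwards [hU.mem_nhds hz] with y hy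
    exact ((hUdiff y hy).differentiableAt (hU.mem_nhds hy)).hasFDerivAt
  -- Laplace equation
  have hlap : H 1 1 + H Complex.I Complex.I = 0 := by
    have e1 : HasFDerivAt (fun w => fderiv ℝ u w 1)
        ((ContinuousLinearMap.apply ℝ ℝ (1:ℂ)).comp H) z :=
      (ContinuousLinearMap.apply ℝ ℝ (1:ℂ)).hasFDerivAt.comp z hDuAt
    have e2 : HasFDerivAt (fun w => fderiv ℝ u w Complex.I)
        ((ContinuousLinearMap.apply ℝ ℝ (Complex.I)).comp H) z :=
      (ContinuousLinearMap.apply ℝ ℝ (Complex.I)).hasFDerivAt.comp z hDuAt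
    have := hharm z hz
    rw [e1.fderiv, e2.fderiv] at this
    simpa using this
  -- real fderiv of g
  have h1 : HasFDerivAt (fun w => ((fderiv ℝ u w 1 : ℝ) : ℂ))
      (Complex.ofRealCLM.comp ((ContinuousLinearMap.apply ℝ ℝ (1:ℂ)).comp H)) z :=
    Complex.ofRealCLM.hasFDerivAt.comp z
      ((ContinuousLinearMap.apply ℝ ℝ (1:ℂ)).hasFDerivAt.comp z hDuAt)
  have h2 : HasFDerivAt (fun w => ((fderiv ℝ u w Complex.I : ℝ) : ℂ))
      (Complex.ofRealCLM.comp ((ContinuousLinearMap.apply ℝ ℝ (Complex.I)).comp H)) z :=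
    Complex.ofRealCLM.hasFDerivAt.comp z
      ((ContinuousLinearMap.apply ℝ ℝ (Complex.I)).hasFDerivAt.comp z hDuAt)
  have h3 : HasFDerivAt (fun w => Complex.I * ((fderiv ℝ u w Complex.I : ℝ) : ℂ))
      (Complex.I • (Complex.ofRealCLM.comp ((ContinuousLinearMap.apply ℝ ℝ (Complex.I)).comp H))) z :=
    h2.const_mul Complex.I
  have h4 := h1.sub h3
  set γ : ℂ := ((H 1 1 : ℝ) : ℂ) - Complex.I * ((H 1 Complex.I : ℝ) : ℂ) with hγ
  have h5 : HasFDerivAt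
      (fun w => ((fderiv ℝ u w 1 : ℝ) : ℂ) - Complex.I * ((fderiv ℝ u w Complex.I : ℝ) : ℂ))
      (((1 : ℂ →L[ℂ] ℂ).smulRight γ)) z := by
    refine hasFDerivAt_of_restrictScalars ℝ (f' := ((1 : ℂ →L[ℂ] ℂ).smulRight γ)) h4 ?_
    refine clm_ext_complex ?_ ?_
    · simp [γ]
    · have hIH : H Complex.I Complex.I = -(H 1 1) := by linarith
      have hsy : H Complex.I 1 = H 1 Complex.I := hsymm _ _
      simp only [ContinuousLinearMap.coe_restrictScalars', ContinuousLinearMap.smulRight_apply,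
        ContinuousLinearMap.one_apply, ContinuousLinearMap.sub_apply,
        ContinuousLinearMap.smul_apply, ContinuousLinearMap.comp_apply,
        ContinuousLinearMap.apply_apply, Complex.ofRealCLM_apply, hIH, hsy, hγ,
        smul_eq_mul]
      ring_nf
      simp [Complex.I_sq]
  exact h5.differentiableAt

lemma exists_primitive {g : ℂ → ℂ} {a : ℂ} {R₁ : ℝ≥0} (hR₁ : 0 < R₁)
    (hg : DifferentiableOn ℂ g (Metric.closedBall a R₁)) {ρ : ℝ} (hρ0 : 0 < ρ)
    (hρ : ρ < R₁) :
    ∃ F : ℂ → ℂ, ∀ z ∈ Metric.ball a ρ, HasDerivAt F (g z) z := by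
  have hps := hg.hasFPowerSeriesOnBall hR₁
  set p := cauchyPowerSeries g a R₁ with hp
  set ρ' : ℝ≥0 := ⟨ρ, hρ0.le⟩ with hρ'
  have hρ'rad : (ρ' : ℝ≥0∞) < p.radius := by
    refine lt_of_lt_of_le ?_ hps.r_le
    exact_mod_cast (show ρ' < R₁ by exact_mod_cast hρ)
  have hsum : Summable (fun n => ‖p n‖ * (ρ' : ℝ) ^ n) := p.summable_norm_mul_pow hρ'rad
  set f : ℕ → ℂ → ℂ := fun n z => ((n : ℂ) + 1)⁻¹ * p.coeff n * (z - a) ^ (n + 1) with hf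
  set f' : ℕ → ℂ → ℂ := fun n z => p.coeff n * (z - a) ^ n with hf'
  have hderiv : ∀ n z, z ∈ Metric.ball a ρ → HasDerivAt (f n) (f' n z) z := by
    intro n z _
    have h1 : HasDerivAt (fun w : ℂ => (w - a) ^ (n + 1))
        (((n : ℂ) + 1) * (z - a) ^ n * 1) z := by
      have := (hasDerivAt_pow (n + 1) (z - a)).comp z ((hasDerivAt_id z).sub_const a)
      simpa [Function.comp_def] using this
    have h2 := h1.const_mul (((n : ℂ) + 1)⁻¹ * p.coeff n)
    refine h2.congr_deriv ?_
    have hne : ((n : ℂ) + 1) ≠ 0 := Nat.cast_add_one_ne_zero n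
    show _ = p.coeff n * (z - a) ^ n
    linear_combination (p.coeff n * (z - a) ^ n) * (inv_mul_cancel₀ (Nat.cast_add_one_ne_zero n : ((n : ℂ) + 1) ≠ 0))
  have hbound : ∀ n z, z ∈ Metric.ball a ρ → ‖f' n z‖ ≤ ‖p n‖ * (ρ' : ℝ) ^ n := by
    intro n z hz
    rw [hf']
    simp only [norm_mul, norm_pow]
    rw [p.norm_apply_eq_norm_coef]
    have hza : ‖z - a‖ ≤ ρ := by
      rw [← dist_eq_norm]
      exact (Metric.mem_ball.1 hz).le
    exact mul_le_mul_of_nonneg_left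
      (pow_le_pow_left₀ (norm_nonneg _) hza n) (norm_nonneg _)
  have hsummable0 : Summable (fun n => f n a) := by
    have : (fun n => f n a) = fun _ => (0 : ℂ) := by
      funext n
      simp [hf]
    rw [this]
    exact summable_zero
  refine ⟨fun z => ∑' n, f n z, fun z hz => ?_⟩
  have hd := hasDerivAt_tsum_of_isPreconnected hsum Metric.isOpen_ball
    (convex_ball a ρ).isPreconnected hderiv hbound (Metric.mem_ball_self hρ0) hsummable0 hz
  have hmem : z - a ∈ Metric.eball (0 : ℂ) R₁ := by
    rw [Metric.mem_eball, edist_zero_right]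
    have : ‖z - a‖₊ < R₁ := by
      rw [← NNReal.coe_lt_coe, coe_nnnorm, ← dist_eq_norm]
      exact lt_trans (Metric.mem_ball.1 hz) hρ
    exact_mod_cast this
  have hs2 : HasSum (fun n => f' n z) (g z) := by
    have hsg := hps.hasSum hmem
    simp only [FormalMultilinearSeries.apply_eq_pow_smul_coeff, smul_eq_mul,
      add_sub_cancel] at hsg
    have hfun : (fun n => f' n z) = fun n => (z - a) ^ n * p.coeff n := by
      funext n
      rw [hf']
      ring
    rw [hfun]
    exact hsg
  rw [← hs2.tsum_eq]
  exact hd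


/-- Lemma 1: if `u` is harmonic (twice continuously differentiable with `Δu = 0`)
on a neighborhood `U` of the closed disc `B̄(a,R)`, nonnegative on `B̄(a,R)`,
and vanishes at a boundary point `z₁`, then `|∇u(z₁)| ≥ u(a)/(2R)`. -/
theorem gradient_lower_bound_at_boundary_zero
    (a : ℂ) (R : ℝ) (hR : 0 < R) (U : Set ℂ) (hU : IsOpen U)
    (hBU : Metric.closedBall a R ⊆ U)
    (u : ℂ → ℝ) (hC2 : ContDiffOn ℝ 2 u U)
    (hharm : ∀ z ∈ U,
      fderiv ℝ (fun w => fderiv ℝ u w 1) z 1 +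
        fderiv ℝ (fun w => fderiv ℝ u w Complex.I) z Complex.I = 0)
    (hpos : ∀ z ∈ Metric.closedBall a R, 0 ≤ u z)
    (z₁ : ℂ) (hz₁ : ‖z₁ - a‖ = R) (huz₁ : u z₁ = 0) :
    u a / (2 * R) ≤ ‖fderiv ℝ u z₁‖ := by
  have hz₁B : z₁ ∈ Metric.closedBall a R := by
    rw [Metric.mem_closedBall, Complex.dist_eq, hz₁]
  have hz₁U : z₁ ∈ U := hBU hz₁B
  have haU : a ∈ U := hBU (Metric.mem_closedBall_self hR.le)
  rcases (hpos a (Metric.mem_closedBall_self hR.le)).eq_or_lt with h0 | hua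
  · rw [← h0]
    simp [norm_nonneg]
  -- thickened neighborhood
  obtain ⟨δ, hδ0, hδU⟩ := (isCompact_closedBall a R).exists_cthickening_subset_open hU hBU
  rw [cthickening_closedBall hδ0.le hR.le] at hδU
  -- the complex gradient
  set g : ℂ → ℂ := fun w =>
    ((fderiv ℝ u w 1 : ℝ) : ℂ) - Complex.I * ((fderiv ℝ u w Complex.I : ℝ) : ℂ) with hg
  set R₁ : ℝ≥0 := ⟨R + δ/2, by positivity⟩ with hR₁
  have hR₁U : Metric.closedBall a (R₁ : ℝ) ⊆ U := by
    refine subset_trans (Metric.closedBall_subset_closedBall ?_) hδU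
    show R + δ/2 ≤ δ + R
    linarith
  have hgd : DifferentiableOn ℂ g (Metric.closedBall a (R₁ : ℝ)) := fun z hz =>
    (cr_differentiable hU hC2 hharm (hR₁U hz)).differentiableWithinAt
  set ρ : ℝ := R + δ/4 with hρdef
  have hρ0 : 0 < ρ := by positivity
  have hρR₁ : ρ < (R₁ : ℝ) := by
    show R + δ/4 < R + δ/2
    linarith
  have hRρ : R < ρ := by
    show R < R + δ/4
    linarith
  obtain ⟨F₀, hF₀⟩ := exists_primitive (by exact_mod_cast lt_trans hρ0 hρR₁) hgd hρ0 hρR₁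
  have hballU : Metric.ball a ρ ⊆ U := fun z hz =>
    hR₁U (Metric.ball_subset_closedBall (Metric.ball_subset_ball hρR₁.le hz))
  -- u - Re F₀ is constant on ball a ρ
  have hzero : ∀ z ∈ Metric.ball a ρ, HasFDerivAt (fun w => u w - (F₀ w).re)
      (0 : ℂ →L[ℝ] ℝ) z := by
    intro z hz
    have hu' : HasFDerivAt u (fderiv ℝ u z) z :=
      ((hC2.differentiableOn two_ne_zero).differentiableAt
        (hU.mem_nhds (hballU hz))).hasFDerivAt
    have hF' : HasFDerivAt (fun w => (F₀ w).re)
        (Complex.reCLM.comp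
          (((1 : ℂ →L[ℂ] ℂ).smulRight (g z)).restrictScalars ℝ)) z :=
      Complex.reCLM.hasFDerivAt.comp z ((hF₀ z hz).hasFDerivAt.restrictScalars ℝ)
    have heq : Complex.reCLM.comp
        (((1 : ℂ →L[ℂ] ℂ).smulRight (g z)).restrictScalars ℝ) = fderiv ℝ u z := by
      refine clm_ext_complex ?_ ?_
      · simp [hg, Complex.mul_re]
      · simp [hg, Complex.mul_re]
    rw [heq] at hF'
    have hsub := hu'.sub hF'
    rw [sub_self] at hsub
    exact hsub
  have hconst : ∀ z ∈ Metric.ball a ρ, u z - (F₀ z).re = u a - (F₀ a).re := by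
    intro z hz
    have hb := Convex.norm_image_sub_le_of_norm_hasFDerivWithin_le
      (f := fun w => u w - (F₀ w).re) (f' := fun _ => (0 : ℂ →L[ℝ] ℝ)) (C := 0)
      (fun w hw => (hzero w hw).hasFDerivWithinAt) (fun w _ => by simp)
      (convex_ball a ρ) (Metric.mem_ball_self hρ0) hz
    rw [zero_mul] at hb
    have := norm_le_zero_iff.1 hb
    have h5 := sub_eq_zero.1 this
    linarith [h5]
  set F : ℂ → ℂ := fun w => F₀ w - F₀ a + ((u a : ℝ) : ℂ) with hF
  have hFre : ∀ z ∈ Metric.ball a ρ, (F z).re = u z := by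
    intro z hz
    have := hconst z hz
    simp only [hF, Complex.add_re, Complex.sub_re, Complex.ofReal_re]
    linarith
  have hFdiff : DifferentiableOn ℂ F (Metric.ball a R) := fun z hz =>
    ((((hF₀ z (Metric.ball_subset_ball hRρ.le hz)).differentiableAt.sub_const
      (F₀ a)).add_const _)).differentiableWithinAt
  have hFa : F a = ((u a : ℝ) : ℂ) := by simp [hF]
  have harnack := harnack_ball hua hFdiff hFa (fun z hz => by
    rw [hFre z (Metric.ball_subset_ball hRρ.le hz)]
    exact hpos z (Metric.ball_subset_closedBall hz))
  -- derivative along the segment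
  set D : ℝ := fderiv ℝ u z₁ (a - z₁) with hD
  have hψ : HasDerivAt (fun τ : ℝ => u (z₁ + τ • (a - z₁))) D 0 := by
    have hline : HasDerivAt (fun τ : ℝ => z₁ + τ • (a - z₁)) (a - z₁) 0 := by
      simpa using ((hasDerivAt_id (0 : ℝ)).smul_const (a - z₁)).const_add z₁
    have hu' : HasFDerivAt u (fderiv ℝ u z₁) (z₁ + (0:ℝ) • (a - z₁)) := by
      have : HasFDerivAt u (fderiv ℝ u z₁) z₁ :=
        ((hC2.differentiableOn two_ne_zero).differentiableAt
          (hU.mem_nhds hz₁U)).hasFDerivAt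
      simpa using this
    exact hu'.comp_hasDerivAt 0 hline
  have hslope : ∀ τ ∈ Set.Ioo (0:ℝ) 1, u a / 2 ≤ u (z₁ + τ • (a - z₁)) / τ := by
    intro τ hτ
    set z : ℂ := z₁ + τ • (a - z₁) with hzdef
    have hz_sub : z - a = ((1 - τ : ℝ) : ℂ) * (z₁ - a) := by
      rw [hzdef]
      rw [Complex.real_smul]
      push_cast
      ring
    have hdist : dist z a = (1 - τ) * R := by
      rw [dist_eq_norm, hz_sub]
      rw [norm_mul]
      rw [Complex.norm_real, Real.norm_eq_abs, _root_.abs_of_nonneg (by linarith [hτ.2] : (0:ℝ) ≤ 1 - τ)]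
      rw [hz₁]
    have hzball : z ∈ Metric.ball a R := by
      rw [Metric.mem_ball, hdist]
      nlinarith [hτ.1, hτ.2, hR]
    have hhar := harnack z hzball
    rw [hFre z (Metric.ball_subset_ball hRρ.le hzball)] at hhar
    rw [hdist] at hhar
    have hsimp : (1 - (1 - τ) * R / R) = τ := by
      field_simp
      ring
    rw [hsimp] at hhar
    rw [le_div_iff₀ hτ.1]
    linarith
  have hDge : u a / 2 ≤ D := by
    have h1 := hasDerivAt_iff_tendsto_slope.1 hψ
    have h2 : Filter.Tendsto (slope (fun τ : ℝ => u (z₁ + τ • (a - z₁))) 0)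
        (𝓝[>] 0) (𝓝 D) :=
      h1.mono_left (nhdsWithin_mono _ (fun x hx => ne_of_gt hx))
    have h3 : Filter.Tendsto (fun τ : ℝ => u (z₁ + τ • (a - z₁)) / τ)
        (𝓝[>] 0) (𝓝 D) := by
      refine h2.congr' ?_ |>.mono_left le_rfl
      · filter_upwards [self_mem_nhdsWithin] with τ hτ
        rw [slope_def_field]
        simp [huz₁]
    refine ge_of_tendsto h3 ?_
    filter_upwards [Ioo_mem_nhdsGT_of_mem (Set.mem_Ico.2 ⟨le_rfl, zero_lt_one⟩)] with τ hτ
    exact hslope τ hτ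
  have hnorm : D ≤ ‖fderiv ℝ u z₁‖ * R := by
    have h3 : ‖fderiv ℝ u z₁ (a - z₁)‖ ≤ ‖fderiv ℝ u z₁‖ * ‖a - z₁‖ :=
      (fderiv ℝ u z₁).le_opNorm _
    have h4 : ‖a - z₁‖ = R := by
      rw [norm_sub_rev, hz₁]
    rw [h4] at h3
    calc D ≤ |D| := le_abs_self D
      _ = ‖fderiv ℝ u z₁ (a - z₁)‖ := by rw [hD]; rfl
      _ ≤ _ := h3
  rw [div_le_iff₀ (by positivity)]
  nlinarith [hDge, hnorm]
end

section
/- (Hadamard three circles theorem for the minimum of a harmonic function.) Let u be harmonic on an open annulus {z ∈ ℂ : ρ₁ < |z − a| < ρ₂} and continuous on its closure, and set m(r) = min_{|z−a|=r} u(z). Then m is a concave function of log r: for all ρ₁ ≤ r₁ < r < r₂ ≤ ρ₂, m(r) ≥ [ m(r₁)·(log r₂ − log r) + m(r₂)·(log r − log r₁) ] / (log r₂ − log r₁). -/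
open Filter Topology Set

noncomputable def qa (a : ℂ) : ℂ → ℝ := fun w => Complex.normSq (w - a)
noncomputable def La (a : ℂ) : ℂ → ℝ := fun w => Real.log (qa a w) / 2

lemma hasFDerivAt_X (a w : ℂ) :
    HasFDerivAt (fun v : ℂ => v.re - a.re) (Complex.reCLM : ℂ →L[ℝ] ℝ) w :=
  (Complex.reCLM.hasFDerivAt).sub_const _

lemma hasFDerivAt_Y (a w : ℂ) :
    HasFDerivAt (fun v : ℂ => v.im - a.im) (Complex.imCLM : ℂ →L[ℝ] ℝ) w :=
  (Complex.imCLM.hasFDerivAt).sub_const _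

lemma hasFDerivAt_qa (a w : ℂ) :
    HasFDerivAt (qa a)
      ((2*(w.re - a.re)) • (Complex.reCLM : ℂ →L[ℝ] ℝ)
        + (2*(w.im - a.im)) • (Complex.imCLM : ℂ →L[ℝ] ℝ)) w := by
  have hX := hasFDerivAt_X a w
  have hY := hasFDerivAt_Y a w
  have h : HasFDerivAt (fun v : ℂ => (v.re - a.re)*(v.re - a.re) + (v.im - a.im)*(v.im - a.im))
      (((w.re - a.re) • (Complex.reCLM : ℂ →L[ℝ] ℝ) + (w.re - a.re) • Complex.reCLM)
        + ((w.im - a.im) • (Complex.imCLM : ℂ →L[ℝ] ℝ) + (w.im - a.im) • Complex.imCLM)) w :=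
    (hX.mul hX).add (hY.mul hY)
  have heq : qa a = fun v : ℂ => (v.re - a.re)*(v.re - a.re) + (v.im - a.im)*(v.im - a.im) := by
    funext v; simp [qa, Complex.normSq_apply, Complex.sub_re, Complex.sub_im]
  rw [heq]
  convert h using 1
  module

lemma fderiv_qa_apply (a w e : ℂ) :
    fderiv ℝ (qa a) w e = 2*(w.re - a.re)*e.re + 2*(w.im - a.im)*e.im := by
  rw [(hasFDerivAt_qa a w).fderiv]
  simp only [ContinuousLinearMap.add_apply, ContinuousLinearMap.coe_smul', Pi.smul_apply, Complex.reCLM_apply, Complex.imCLM_apply, smul_eq_mul]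

lemma qa_diff (a w : ℂ) : DifferentiableAt ℝ (qa a) w := (hasFDerivAt_qa a w).differentiableAt

lemma qa_d1_eq (a : ℂ) : (fun w => fderiv ℝ (qa a) w 1) = fun w => 2*w.re - 2*a.re := by
  funext w; rw [fderiv_qa_apply]; simp; ring

lemma qa_dI_eq (a : ℂ) : (fun w => fderiv ℝ (qa a) w Complex.I) = fun w => 2*w.im - 2*a.im := by
  funext w; rw [fderiv_qa_apply]; simp; ring

lemma hasFDerivAt_qa_d1 (a w : ℂ) :
    HasFDerivAt (fun w => fderiv ℝ (qa a) w 1) ((2:ℝ) • (Complex.reCLM : ℂ →L[ℝ] ℝ)) w := by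
  rw [qa_d1_eq]
  simpa using ((Complex.reCLM.hasFDerivAt (x := w)).const_mul (2:ℝ)).sub_const (2*a.re)

lemma hasFDerivAt_qa_dI (a w : ℂ) :
    HasFDerivAt (fun w => fderiv ℝ (qa a) w Complex.I) ((2:ℝ) • (Complex.imCLM : ℂ →L[ℝ] ℝ)) w := by
  rw [qa_dI_eq]
  simpa using ((Complex.imCLM.hasFDerivAt (x := w)).const_mul (2:ℝ)).sub_const (2*a.im)

lemma qa_lap (a z : ℂ) :
    fderiv ℝ (fun w => fderiv ℝ (qa a) w 1) z 1
      + fderiv ℝ (fun w => fderiv ℝ (qa a) w Complex.I) z Complex.I = 4 := by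
  rw [(hasFDerivAt_qa_d1 a z).fderiv, (hasFDerivAt_qa_dI a z).fderiv]
  simp; norm_num

lemma qa_pos (a w : ℂ) (hw : w ≠ a) : 0 < qa a w := by
  simpa [qa, Complex.normSq_pos, sub_ne_zero] using hw


lemma hasFDerivAt_La (a w : ℂ) (hw : w ≠ a) :
    HasFDerivAt (La a)
      ((1/2 : ℝ) • ((qa a w)⁻¹ • ((2*(w.re - a.re)) • (Complex.reCLM : ℂ →L[ℝ] ℝ)
        + (2*(w.im - a.im)) • (Complex.imCLM : ℂ →L[ℝ] ℝ)))) w := by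
  have h := ((hasFDerivAt_qa a w).log (qa_pos a w hw).ne').const_mul (1/2 : ℝ)
  apply h.congr_of_eventuallyEq
  filter_upwards with v
  simp [La]
  ring

lemma La_diff (a w : ℂ) (hw : w ≠ a) : DifferentiableAt ℝ (La a) w :=
  (hasFDerivAt_La a w hw).differentiableAt

lemma fderiv_La_apply (a w e : ℂ) (hw : w ≠ a) :
    fderiv ℝ (La a) w e = ((w.re - a.re)*e.re + (w.im - a.im)*e.im) / qa a w := by
  rw [(hasFDerivAt_La a w hw).fderiv]
  simp only [ContinuousLinearMap.smul_apply, ContinuousLinearMap.add_apply,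
    ContinuousLinearMap.coe_smul', Pi.smul_apply,
    Complex.reCLM_apply, Complex.imCLM_apply, smul_eq_mul]
  field_simp

lemma compl_mem (a z : ℂ) (hz : z ≠ a) : {a}ᶜ ∈ 𝓝 z :=
  (isOpen_compl_singleton).mem_nhds (by simpa using hz)

lemma La_d1_ev (a z : ℂ) (hz : z ≠ a) :
    (fun w => fderiv ℝ (La a) w 1) =ᶠ[𝓝 z] (fun w => (w.re - a.re) * (qa a w)⁻¹) := by
  filter_upwards [compl_mem a z hz] with w hw
  rw [fderiv_La_apply a w 1 (by simpa using hw)]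
  simp [div_eq_mul_inv]

lemma La_dI_ev (a z : ℂ) (hz : z ≠ a) :
    (fun w => fderiv ℝ (La a) w Complex.I) =ᶠ[𝓝 z] (fun w => (w.im - a.im) * (qa a w)⁻¹) := by
  filter_upwards [compl_mem a z hz] with w hw
  rw [fderiv_La_apply a w Complex.I (by simpa using hw)]
  simp [div_eq_mul_inv]

lemma hasFDerivAt_inv_qa (a z : ℂ) (hz : z ≠ a) :
    HasFDerivAt (fun v => (qa a v)⁻¹)
      ((-(qa a z ^ 2)⁻¹) • ((2*(z.re - a.re)) • (Complex.reCLM : ℂ →L[ℝ] ℝ)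
        + (2*(z.im - a.im)) • (Complex.imCLM : ℂ →L[ℝ] ℝ))) z :=
  (hasDerivAt_inv (qa_pos a z hz).ne').comp_hasFDerivAt z (hasFDerivAt_qa a z)

lemma hasFDerivAt_G1 (a z : ℂ) (hz : z ≠ a) :
    HasFDerivAt (fun w => (w.re - a.re) * (qa a w)⁻¹)
      ((z.re - a.re) • ((-(qa a z ^ 2)⁻¹) • ((2*(z.re - a.re)) • (Complex.reCLM : ℂ →L[ℝ] ℝ)
          + (2*(z.im - a.im)) • (Complex.imCLM : ℂ →L[ℝ] ℝ)))
        + (qa a z)⁻¹ • (Complex.reCLM : ℂ →L[ℝ] ℝ)) z :=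
  (hasFDerivAt_X a z).mul (hasFDerivAt_inv_qa a z hz)

lemma hasFDerivAt_G2 (a z : ℂ) (hz : z ≠ a) :
    HasFDerivAt (fun w => (w.im - a.im) * (qa a w)⁻¹)
      ((z.im - a.im) • ((-(qa a z ^ 2)⁻¹) • ((2*(z.re - a.re)) • (Complex.reCLM : ℂ →L[ℝ] ℝ)
          + (2*(z.im - a.im)) • (Complex.imCLM : ℂ →L[ℝ] ℝ)))
        + (qa a z)⁻¹ • (Complex.imCLM : ℂ →L[ℝ] ℝ)) z :=
  (hasFDerivAt_Y a z).mul (hasFDerivAt_inv_qa a z hz)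

lemma La_d1_diff (a z : ℂ) (hz : z ≠ a) :
    DifferentiableAt ℝ (fun w => fderiv ℝ (La a) w 1) z :=
  (hasFDerivAt_G1 a z hz).differentiableAt.congr_of_eventuallyEq (La_d1_ev a z hz)

lemma La_dI_diff (a z : ℂ) (hz : z ≠ a) :
    DifferentiableAt ℝ (fun w => fderiv ℝ (La a) w Complex.I) z :=
  (hasFDerivAt_G2 a z hz).differentiableAt.congr_of_eventuallyEq (La_dI_ev a z hz)

lemma La_lap (a z : ℂ) (hz : z ≠ a) :
    fderiv ℝ (fun w => fderiv ℝ (La a) w 1) z 1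
      + fderiv ℝ (fun w => fderiv ℝ (La a) w Complex.I) z Complex.I = 0 := by
  rw [(La_d1_ev a z hz).fderiv_eq, (La_dI_ev a z hz).fderiv_eq,
    (hasFDerivAt_G1 a z hz).fderiv, (hasFDerivAt_G2 a z hz).fderiv]
  have hq : qa a z ≠ 0 := (qa_pos a z hz).ne'
  have hqq : qa a z = (z.re - a.re)^2 + (z.im - a.im)^2 := by
    simp [qa, Complex.normSq_apply, Complex.sub_re, Complex.sub_im]; ring
  simp only [ContinuousLinearMap.add_apply, ContinuousLinearMap.smul_apply,
    ContinuousLinearMap.coe_smul', Pi.smul_apply,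
    Complex.reCLM_apply, Complex.imCLM_apply, smul_eq_mul,
    Complex.one_re, Complex.one_im, Complex.I_re, Complex.I_im]
  field_simp
  rw [hqq]; ring

lemma aux_second_deriv_nonneg {φ ψ : ℝ → ℝ} {c : ℝ}
    (hφ : ∀ᶠ t in 𝓝 (0:ℝ), HasDerivAt φ (ψ t) t)
    (hψ : HasDerivAt ψ c 0) (hmin : IsLocalMin φ 0) : 0 ≤ c := by
  have h0 : ψ 0 = 0 := hmin.hasDerivAt_eq_zero hφ.self_of_nhds
  by_contra hc
  push_neg at hc
  have hslope : Tendsto (slope ψ 0) (𝓝[≠] (0:ℝ)) (𝓝 c) :=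
    hasDerivAt_iff_tendsto_slope.1 hψ
  have hev : ∀ᶠ t in 𝓝[≠] (0:ℝ), slope ψ 0 t < 0 :=
    hslope.eventually_lt_const hc
  have hev' : ∀ᶠ t in 𝓝[>] (0:ℝ), ψ t < 0 := by
    have := hev.filter_mono (nhdsWithin_mono 0 (by
      intro x hx
      exact ne_of_gt hx : Ioi (0:ℝ) ⊆ {0}ᶜ))
    filter_upwards [this, self_mem_nhdsWithin] with t ht ht'
    have : t⁻¹ * ψ t < 0 := by simpa [slope, h0] using ht
    rcases mul_neg_iff.1 this with ⟨h, h'⟩ | ⟨h, h'⟩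
    · exact h'
    · exact absurd (inv_pos.2 ht') (not_lt.2 h.le)
  have hall : ∀ᶠ t in 𝓝[>] (0:ℝ),
      HasDerivAt φ (ψ t) t ∧ φ 0 ≤ φ t ∧ ψ t < 0 := by
    have h1 := hφ.filter_mono (nhdsWithin_le_nhds (s := Ioi (0:ℝ)))
    have h2 := (hmin.filter_mono (nhdsWithin_le_nhds (s := Ioi (0:ℝ))) :
      ∀ᶠ t in 𝓝[>] (0:ℝ), φ 0 ≤ φ t)
    filter_upwards [h1, h2, hev'] with t a b c; exact ⟨a, b, c⟩
  rcases mem_nhdsGT_iff_exists_Ioc_subset.1 hall with ⟨δ, hδ, hsub⟩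
  have hδ0 : (0:ℝ) < δ := hδ
  have hcont : ContinuousOn φ (Icc 0 δ) := by
    intro t ht
    rcases eq_or_lt_of_le ht.1 with h | h
    · subst h; exact hφ.self_of_nhds.continuousAt.continuousWithinAt
    · exact ((hsub ⟨h, ht.2⟩).1.continuousAt).continuousWithinAt
  have hanti : StrictAntiOn φ (Icc 0 δ) := by
    apply strictAntiOn_of_deriv_neg (convex_Icc 0 δ) hcont
    intro t ht
    rw [interior_Icc] at ht
    have h := hsub ⟨ht.1, le_of_lt ht.2⟩
    rw [h.1.deriv]
    exact h.2.2
  have h1 : φ δ < φ 0 := hanti (left_mem_Icc.2 hδ0.le) (right_mem_Icc.2 hδ0.le) hδ0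
  have h2 : φ 0 ≤ φ δ := (hsub ⟨hδ0, le_rfl⟩).2.1
  linarith
lemma aux_dir_nonneg {f : ℂ → ℝ} {z e : ℂ}
    (hf : ∀ᶠ w in 𝓝 z, DifferentiableAt ℝ f w)
    (hf2 : DifferentiableAt ℝ (fun w => fderiv ℝ f w e) z)
    (hmin : IsLocalMin f z) : 0 ≤ fderiv ℝ (fun w => fderiv ℝ f w e) z e := by
  set ℓ : ℝ → ℂ := fun t => z + t • e with hℓ
  have hline : ∀ t : ℝ, HasDerivAt ℓ e t := by
    intro t
    have h := ((hasDerivAt_id t).smul_const e).const_add z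
    simp only [one_smul] at h
    exact h
  have hℓ0 : ℓ 0 = z := by simp [hℓ]
  have htend : Tendsto ℓ (𝓝 0) (𝓝 z) := by
    rw [← hℓ0]; exact (hline 0).continuousAt.tendsto
  set φ : ℝ → ℝ := fun t => f (ℓ t) with hφdef
  set ψ : ℝ → ℝ := fun t => fderiv ℝ f (ℓ t) e with hψdef
  have hφ : ∀ᶠ t in 𝓝 (0:ℝ), HasDerivAt φ (ψ t) t := by
    filter_upwards [htend.eventually hf] with t ht
    exact (ht.hasFDerivAt.comp_hasDerivAt t (hline t))
  have hψ : HasDerivAt ψ (fderiv ℝ (fun w => fderiv ℝ f w e) z e) 0 := by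
    have h2 : HasFDerivAt (fun w => (fderiv ℝ f w) e) (fderiv ℝ (fun w => (fderiv ℝ f w) e) z) (ℓ 0) := hℓ0 ▸ hf2.hasFDerivAt
    have := (h2.comp_hasDerivAt 0 (hline 0))
    exact this
  have hminφ : IsLocalMin φ 0 := by
    have : ∀ᶠ t in 𝓝 (0:ℝ), f z ≤ φ t := htend.eventually hmin
    simpa [IsLocalMin, IsMinFilter, hφdef, hℓ0] using this
  exact aux_second_deriv_nonneg hφ hψ hminφ


/-- Hadamard three circles theorem for the minimum of a harmonic function:
if `u` is harmonic on the open annulus `{ρ₁ < |z − a| < ρ₂}` and continuous on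
its closure, then `m(r) = min_{|z−a|=r} u(z)` is a concave function of `log r`. -/
theorem hadamard_three_circles_min
    (a : ℂ) (ρ₁ ρ₂ : ℝ) (hρ₁ : 0 < ρ₁) (hρ : ρ₁ < ρ₂)
    (u : ℂ → ℝ)
    (hC2 : ContDiffOn ℝ 2 u
      {z : ℂ | ρ₁ < ‖z - a‖ ∧ ‖z - a‖ < ρ₂})
    (hharm : ∀ z : ℂ, ρ₁ < ‖z - a‖ → ‖z - a‖ < ρ₂ →
      fderiv ℝ (fun w => fderiv ℝ u w 1) z 1 +
        fderiv ℝ (fun w => fderiv ℝ u w Complex.I) z Complex.I = 0)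
    (hcont : ContinuousOn u
      {z : ℂ | ρ₁ ≤ ‖z - a‖ ∧ ‖z - a‖ ≤ ρ₂})
    (m : ℝ → ℝ) (hm : ∀ r, m r = sInf (u '' Metric.sphere a r))
    (r₁ r r₂ : ℝ) (h1 : ρ₁ ≤ r₁) (h2 : r₁ < r) (h3 : r < r₂) (h4 : r₂ ≤ ρ₂) :
    (m r₁ * (Real.log r₂ - Real.log r) + m r₂ * (Real.log r - Real.log r₁)) /
        (Real.log r₂ - Real.log r₁) ≤ m r := by
  have hr₁0 : 0 < r₁ := lt_of_lt_of_le hρ₁ h1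
  have hr₂0 : 0 < r₂ := lt_trans (lt_trans hr₁0 h2) h3
  have hlog : Real.log r₁ < Real.log r₂ := Real.log_lt_log hr₁0 (h2.trans h3)
  have hΔ : Real.log r₂ - Real.log r₁ ≠ 0 := by linarith
  set β : ℝ := (m r₂ - m r₁) / (Real.log r₂ - Real.log r₁) with hβ
  set α : ℝ := m r₁ - β * Real.log r₁ with hα
  set S : Set ℂ := {z : ℂ | ρ₁ < ‖z - a‖ ∧ ‖z - a‖ < ρ₂} with hS
  set Acl : Set ℂ := {z : ℂ | r₁ ≤ ‖z - a‖ ∧ ‖z - a‖ ≤ r₂} with hAcl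
  have hcontabs : Continuous (fun z : ℂ => ‖z - a‖) :=
    continuous_norm.comp (continuous_id.sub continuous_const)
  have hSopen : IsOpen S := by
    have : S = (fun z : ℂ => ‖z - a‖) ⁻¹' (Set.Ioo ρ₁ ρ₂) := by
      ext z; simp [hS, Set.mem_Ioo]
    rw [this]; exact isOpen_Ioo.preimage hcontabs
  have hAclclosed : IsClosed Acl := by
    have : Acl = (fun z : ℂ => ‖z - a‖) ⁻¹' (Set.Icc r₁ r₂) := by
      ext z; simp [hAcl, Set.mem_Icc]
    rw [this]; exact isClosed_Icc.preimage hcontabs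
  have hAclcomp : IsCompact Acl := by
    apply (isCompact_closedBall a r₂).of_isClosed_subset hAclclosed
    intro z hz
    simp only [Metric.mem_closedBall, Complex.dist_eq]
    exact hz.2
  have hAclne : Acl.Nonempty := by
    refine ⟨a + (r₁ : ℂ), ?_⟩
    simp [hAcl, Complex.norm_real, abs_of_pos hr₁0, le_of_lt (h2.trans h3)]
  have hAclsub : Acl ⊆ {z : ℂ | ρ₁ ≤ ‖z - a‖ ∧ ‖z - a‖ ≤ ρ₂} := by
    intro z hz; exact ⟨le_trans h1 hz.1, le_trans hz.2 h4⟩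
  have hAclne_a : ∀ z ∈ Acl, z ≠ a := by
    intro z hz h
    have hz1 := hz.1
    rw [h, sub_self, norm_zero] at hz1
    linarith
  have hsphere_mem : ∀ (s : ℝ) (z : ℂ), z ∈ Metric.sphere a s ↔ ‖z - a‖ = s := by
    intro s z; rw [Metric.mem_sphere, Complex.dist_eq]
  -- min of u on spheres
  have hsph_sub : ∀ s : ℝ, ρ₁ ≤ s → s ≤ ρ₂ →
      Metric.sphere a s ⊆ {z : ℂ | ρ₁ ≤ ‖z - a‖ ∧ ‖z - a‖ ≤ ρ₂} := by
    intro s hs1 hs2 z hz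
    rw [hsphere_mem] at hz
    rw [Set.mem_setOf_eq, hz]; exact ⟨hs1, hs2⟩
  have hm_le : ∀ s : ℝ, ρ₁ ≤ s → s ≤ ρ₂ → ∀ z ∈ Metric.sphere a s, m s ≤ u z := by
    intro s hs1 hs2 z hz
    rw [hm s]
    exact csInf_le (((isCompact_sphere a s).image_of_continuousOn
      (hcont.mono (hsph_sub s hs1 hs2))).bddBelow) (Set.mem_image_of_mem u hz)
  -- the comparison function
  set H : ℂ → ℝ := fun w => u w - (α + β * La a w) with hH
  have hLa_sphere : ∀ (s : ℝ), 0 < s → ∀ z : ℂ, ‖z - a‖ = s →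
      La a z = Real.log s := by
    intro s hs z hz
    have : qa a z = s ^ 2 := by rw [qa, ← Complex.sq_norm, hz]
    rw [La, this, Real.log_pow]
    push_cast; ring
  -- boundary nonnegativity
  have hbdry : ∀ z : ℂ, (‖z - a‖ = r₁ ∨ ‖z - a‖ = r₂) → 0 ≤ H z := by
    intro z hz
    rcases hz with hz | hz
    · have h5 : u z ≥ m r₁ := hm_le r₁ h1 (by linarith) z ((hsphere_mem r₁ z).2 hz)
      have h6 : La a z = Real.log r₁ := hLa_sphere r₁ hr₁0 z hz
      simp only [hH, h6, hα]
      linarith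
    · have h5 : u z ≥ m r₂ := hm_le r₂ (by linarith) h4 z ((hsphere_mem r₂ z).2 hz)
      have h6 : La a z = Real.log r₂ := hLa_sphere r₂ hr₂0 z hz
      have h7 : α + β * Real.log r₂ = m r₂ := by
        rw [hα, hβ]; field_simp; ring
      simp only [hH, h6]
      linarith
  -- main claim : H ≥ 0 on Acl
  have hH0 : ∀ z ∈ Acl, 0 ≤ H z := by
    intro z hzA
    have key : ∀ ε : ℝ, 0 < ε → -(ε * r₂ ^ 2) ≤ H z := by
      intro ε hε
      set G : ℂ → ℝ := fun w => H w - ε * qa a w with hG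
      have hGcont : ContinuousOn G Acl := by
        apply ContinuousOn.sub
        · apply ContinuousOn.sub (hcont.mono hAclsub)
          apply ContinuousOn.add continuousOn_const
          apply ContinuousOn.mul continuousOn_const
          intro w hw
          exact ((La_diff a w (hAclne_a w hw)).continuousAt).continuousWithinAt
        · exact continuousOn_const.mul (fun w _ => ((qa_diff a w).continuousAt).continuousWithinAt)
      obtain ⟨z', hz'A, hz'min⟩ := hAclcomp.exists_isMinOn hAclne hGcont
      have hz'bdry : ‖z' - a‖ = r₁ ∨ ‖z' - a‖ = r₂ := by
        by_contra hcon
        push_neg at hcon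
        have hint : r₁ < ‖z' - a‖ ∧ ‖z' - a‖ < r₂ :=
          ⟨lt_of_le_of_ne hz'A.1 (Ne.symm hcon.1), lt_of_le_of_ne hz'A.2 hcon.2⟩
        -- interior point : contradiction with subharmonicity
        have hz'S : z' ∈ S := ⟨lt_of_le_of_lt h1 hint.1, lt_of_lt_of_le hint.2 h4⟩
        have hz'ne : z' ≠ a := hAclne_a z' hz'A
        have hOopen : IsOpen {w : ℂ | r₁ < ‖w - a‖ ∧ ‖w - a‖ < r₂} := by
          have : {w : ℂ | r₁ < ‖w - a‖ ∧ ‖w - a‖ < r₂}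
              = (fun z : ℂ => ‖z - a‖) ⁻¹' (Set.Ioo r₁ r₂) := by
            ext w; simp [Set.mem_Ioo]
          rw [this]; exact isOpen_Ioo.preimage hcontabs
        have hAnhds : Acl ∈ 𝓝 z' := by
          apply Filter.mem_of_superset (hOopen.mem_nhds hint)
          intro w hw; exact ⟨le_of_lt hw.1, le_of_lt hw.2⟩
        have hlocmin : IsLocalMin G z' := hz'min.isLocalMin hAnhds
        have hudiff : ∀ w ∈ S, DifferentiableAt ℝ u w := by
          intro w hw
          exact (hC2.contDiffAt (hSopen.mem_nhds hw)).differentiableAt (by norm_num)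
        have hSne_a : ∀ w ∈ S, w ≠ a := by
          intro w hw h
          rw [h] at hw
          simp [hS] at hw
          linarith [hw.1]
        have hGdiff : ∀ w ∈ S, DifferentiableAt ℝ G w := by
          intro w hw
          exact ((hudiff w hw).sub ((differentiableAt_const α).add
            ((La_diff a w (hSne_a w hw)).const_mul β))).sub ((qa_diff a w).const_mul ε)
        have hGdiff_ev : ∀ᶠ w in 𝓝 z', DifferentiableAt ℝ G w := by
          filter_upwards [hSopen.mem_nhds hz'S] with w hw using hGdiff w hw
        -- first derivative of G, eventually
        have hGev : ∀ e : ℂ, (fun w => fderiv ℝ G w e) =ᶠ[𝓝 z']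
            (fun w => fderiv ℝ u w e - β * fderiv ℝ (La a) w e - ε * fderiv ℝ (qa a) w e) := by
          intro e
          filter_upwards [hSopen.mem_nhds hz'S] with w hw
          have hLd := La_diff a w (hSne_a w hw)
          have hqd := qa_diff a w
          have hfd : HasFDerivAt G
              ((fderiv ℝ u w - β • fderiv ℝ (La a) w) - ε • fderiv ℝ (qa a) w) w :=
            (((hudiff w hw).hasFDerivAt.sub
              ((hLd.hasFDerivAt.const_mul β).const_add α))).sub
              (hqd.hasFDerivAt.const_mul ε)
          rw [hfd.fderiv]
          simp [ContinuousLinearMap.sub_apply, ContinuousLinearMap.smul_apply]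
        -- differentiability of first derivatives of u
        have hu1d : ∀ e : ℂ, DifferentiableAt ℝ (fun w => fderiv ℝ u w e) z' := by
          intro e
          have hcd : ContDiffAt ℝ 2 u z' := hC2.contDiffAt (hSopen.mem_nhds hz'S)
          have h2' : ContDiffAt ℝ 1 (fderiv ℝ u) z' := hcd.fderiv_right (by norm_num)
          exact (h2'.differentiableAt (by norm_num)).clm_apply (differentiableAt_const e)
        have hq1d : DifferentiableAt ℝ (fun w => fderiv ℝ (qa a) w 1) z' :=
          (hasFDerivAt_qa_d1 a z').differentiableAt
        have hqId : DifferentiableAt ℝ (fun w => fderiv ℝ (qa a) w Complex.I) z' :=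
          (hasFDerivAt_qa_dI a z').differentiableAt
        have hcomb : ∀ (e : ℂ),
            DifferentiableAt ℝ (fun w => fderiv ℝ (La a) w e) z' →
            DifferentiableAt ℝ (fun w => fderiv ℝ (qa a) w e) z' →
            fderiv ℝ (fun w => fderiv ℝ G w e) z' e =
              fderiv ℝ (fun w => fderiv ℝ u w e) z' e
                - β * fderiv ℝ (fun w => fderiv ℝ (La a) w e) z' e
                - ε * fderiv ℝ (fun w => fderiv ℝ (qa a) w e) z' e := by
          intro e hLd hqd
          rw [(hGev e).fderiv_eq]
          rw [fderiv_fun_sub ((hu1d e).fun_sub (hLd.const_mul β)) (hqd.const_mul ε),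
            fderiv_fun_sub (hu1d e) (hLd.const_mul β),
            fderiv_const_mul hLd β, fderiv_const_mul hqd ε]
          simp [ContinuousLinearMap.sub_apply, ContinuousLinearMap.smul_apply]
        have hG2diff : ∀ (e : ℂ),
            DifferentiableAt ℝ (fun w => fderiv ℝ (La a) w e) z' →
            DifferentiableAt ℝ (fun w => fderiv ℝ (qa a) w e) z' →
            DifferentiableAt ℝ (fun w => fderiv ℝ G w e) z' := by
          intro e hLd hqd
          exact (((hu1d e).sub (hLd.const_mul β)).sub (hqd.const_mul ε)).congr_of_eventuallyEq
            (hGev e)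
        have hd1 := aux_dir_nonneg (e := 1) hGdiff_ev
          (hG2diff 1 (La_d1_diff a z' hz'ne) hq1d) hlocmin
        have hdI := aux_dir_nonneg (e := Complex.I) hGdiff_ev
          (hG2diff Complex.I (La_dI_diff a z' hz'ne) hqId) hlocmin
        have e1 := hcomb 1 (La_d1_diff a z' hz'ne) hq1d
        have eI := hcomb Complex.I (La_dI_diff a z' hz'ne) hqId
        have hsum : fderiv ℝ (fun w => fderiv ℝ G w 1) z' 1
            + fderiv ℝ (fun w => fderiv ℝ G w Complex.I) z' Complex.I = -(4*ε) := by
          rw [e1, eI]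
          have hu0 := hharm z' hz'S.1 hz'S.2
          have hL0 := La_lap a z' hz'ne
          have hq4 := qa_lap a z'
          linear_combination hu0 - β * hL0 - ε * hq4
        linarith
      -- boundary case gives the bound
      have hGz' : 0 ≤ H z' - ε * qa a z' + ε * r₂ ^ 2 := by
        have h5 : 0 ≤ H z' := hbdry z' hz'bdry
        have h6 : qa a z' ≤ r₂ ^ 2 := by
          rw [qa, ← Complex.sq_norm]
          rcases hz'bdry with h | h <;> rw [h] <;> nlinarith
        nlinarith
      have h7 : G z' ≤ G z := hz'min hzA
      have h8 : 0 ≤ qa a z := (Complex.normSq_nonneg _)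
      simp only [hG] at h7
      nlinarith
    by_contra hcon
    push_neg at hcon
    have hd : (0:ℝ) < r₂ ^ 2 + 1 := by positivity
    have := key (-H z / (r₂ ^ 2 + 1)) (div_pos (by linarith) hd)
    rw [div_mul_eq_mul_div] at this
    have h10 : -H z ≤ -H z * r₂ ^ 2 / (r₂ ^ 2 + 1) := by linarith
    rw [le_div_iff₀ hd] at h10
    nlinarith
  -- conclude
  have hmain : α + β * Real.log r ≤ m r := by
    rw [hm r]
    apply le_csInf
    · have : (Metric.sphere a r).Nonempty :=
        NormedSpace.sphere_nonempty.2 (le_of_lt (hr₁0.trans h2))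
      exact this.image u
    · rintro b ⟨z, hz, rfl⟩
      have hza : ‖z - a‖ = r := (hsphere_mem r z).1 hz
      have hzA : z ∈ Acl := ⟨by rw [hza]; exact le_of_lt h2, by rw [hza]; exact le_of_lt h3⟩
      have := hH0 z hzA
      have hLz : La a z = Real.log r := hLa_sphere r (hr₁0.trans h2) z hza
      simp only [hH, hLz] at this
      linarith
  have heq : (m r₁ * (Real.log r₂ - Real.log r) + m r₂ * (Real.log r - Real.log r₁)) /
      (Real.log r₂ - Real.log r₁) = α + β * Real.log r := by
    rw [hα, hβ]; field_simp; ring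
  rw [heq]
  exact hmain
end

section
/- Let n ≥ 1 and let f₀, …, fₙ : ℂ → ℂ be entire functions with no common zero, with spherical derivative ‖f′‖²(z) = (∑ⱼ |fⱼ(z)|²)⁻² ∑_{i≠j} |fᵢ′fⱼ − fᵢfⱼ′|²(z). Let z₁ ∈ ℂ and k ∈ {1, …, n} be such that f₀(z₁) ≠ 0 and |f₀(z₁)| = |f_k(z₁)| ≥ |fⱼ(z₁)| for every j ∈ {1, …, n}. Then ‖f′‖(z₁) ≥ (n+1)⁻¹ · | f₀′(z₁)/f₀(z₁) − f_k′(z₁)/f_k(z₁) |. -/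
/-- Squared spherical derivative of the holomorphic curve with homogeneous
representation `f = (f 0, …, f n) : ℂ → ℙⁿ`. -/
noncomputable def sphD2 (n : ℕ) (f : Fin (n + 1) → ℂ → ℂ) (z : ℂ) : ℝ :=
  ((∑ j, ‖f j z‖ ^ 2) ^ 2)⁻¹ *
    ∑ i, ∑ j, if i ≠ j then
      ‖deriv (f i) z * f j z - f i z * deriv (f j) z‖ ^ 2 else 0

/-- If `|f₀(z₁)| = |f_k(z₁)| ≥ |fⱼ(z₁)|` for all `j ∈ {1,…,n}` and `f₀(z₁) ≠ 0`,
then `‖f′‖(z₁) ≥ (n+1)⁻¹ |f₀′(z₁)/f₀(z₁) − f_k′(z₁)/f_k(z₁)|`. -/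
theorem spherical_derivative_log_derivative_bound
    (n : ℕ) (hn : 1 ≤ n) (f : Fin (n + 1) → ℂ → ℂ)
    (hent : ∀ j, Differentiable ℂ (f j))
    (hnz : ∀ z : ℂ, ∃ j, f j z ≠ 0)
    (z₁ : ℂ) (k : Fin (n + 1)) (hk : k ≠ 0)
    (h0 : f 0 z₁ ≠ 0)
    (heq : ‖f 0 z₁‖ = ‖f k z₁‖)
    (hmax : ∀ j : Fin (n + 1), j ≠ 0 → ‖f j z₁‖ ≤ ‖f 0 z₁‖) :
    ((n : ℝ) + 1)⁻¹ *
        ‖deriv (f 0) z₁ / f 0 z₁ - deriv (f k) z₁ / f k z₁‖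
      ≤ Real.sqrt (sphD2 n f z₁) := by
  have hfk : f k z₁ ≠ 0 := by
    intro h
    rw [h, norm_zero] at heq
    exact h0 (norm_eq_zero.mp heq)
  set A := ‖deriv (f 0) z₁ * f k z₁ - f 0 z₁ * deriv (f k) z₁‖ with hA
  set S := ∑ j, ‖f j z₁‖ ^ 2 with hS
  have hA0 : 0 ≤ A := norm_nonneg _
  have hS_pos : 0 < S := by
    exact Finset.sum_pos' (fun j _ => sq_nonneg _)
      ⟨0, Finset.mem_univ _, pow_pos (norm_pos_iff.mpr h0) 2⟩
  have hSle : S ≤ ((n : ℝ) + 1) * ‖f 0 z₁‖ ^ 2 := by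
    calc S ≤ ∑ _j : Fin (n + 1), ‖f 0 z₁‖ ^ 2 := by
          refine Finset.sum_le_sum fun j _ => ?_
          by_cases hj : j = 0
          · rw [hj]
          · exact pow_le_pow_left₀ (norm_nonneg _) (hmax j hj) 2
      _ = ((n : ℝ) + 1) * ‖f 0 z₁‖ ^ 2 := by
          rw [Finset.sum_const, Finset.card_univ, Fintype.card_fin, nsmul_eq_mul]
          push_cast; ring
  have hT : A ^ 2 ≤ ∑ i, ∑ j, if i ≠ j then
      ‖deriv (f i) z₁ * f j z₁ - f i z₁ * deriv (f j) z₁‖ ^ 2 else 0 := by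
    have h1 : A ^ 2 ≤ ∑ j, if (0 : Fin (n + 1)) ≠ j then
        ‖deriv (f 0) z₁ * f j z₁ - f 0 z₁ * deriv (f j) z₁‖ ^ 2 else 0 := by
      have := Finset.single_le_sum (f := fun j => if (0 : Fin (n + 1)) ≠ j then
        ‖deriv (f 0) z₁ * f j z₁ - f 0 z₁ * deriv (f j) z₁‖ ^ 2 else 0)
        (fun j _ => by positivity) (Finset.mem_univ k)
      simpa [Ne.symm hk] using this
    refine h1.trans ?_
    exact Finset.single_le_sum (f := fun i => ∑ j, if i ≠ j then
        ‖deriv (f i) z₁ * f j z₁ - f i z₁ * deriv (f j) z₁‖ ^ 2 else 0)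
      (fun i _ => Finset.sum_nonneg fun j _ => by positivity) (Finset.mem_univ 0)
  have hsph : (A / S) ^ 2 ≤ sphD2 n f z₁ := by
    unfold sphD2
    rw [div_pow, div_eq_inv_mul, hS]
    exact mul_le_mul_of_nonneg_left hT (inv_nonneg.mpr (sq_nonneg _))
  have hfinal := Real.sqrt_le_sqrt hsph
  rw [Real.sqrt_sq (div_nonneg hA0 hS_pos.le)] at hfinal
  refine le_trans ?_ hfinal
  rw [div_sub_div _ _ h0 hfk, norm_div, norm_mul, ← heq]
  rw [show ‖f 0 z₁‖ * ‖f 0 z₁‖ = ‖f 0 z₁‖ ^ 2 by ring]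
  rw [← hA, inv_mul_eq_div, div_div]
  exact div_le_div_of_nonneg_left hA0 hS_pos (by push_cast; linarith [hSle])
end
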